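/- Let α, β > 0, ω ∈ ℝ, let n be a nonzero integer, and define P(t) = t⁴·ln(t²/β) − t⁴/2. Suppose u ∈ C²((0,∞)) satisfies the Gross–Pitaevskii vortex equation u''(r) + u'(r)/r − (n²/r² + 2ω)·u(r) − 2α·u(r)³·ln(u(r)²/β) = 0 on (0,∞). Then for all 0 < r₁ < r₂ < ∞: r₂²·u'(r₂)² − r₁²·u'(r₁)² = n²·(u(r₂)² − u(r₁)²) + 2ω·(r₂²·u(r₂)² − r₁²·u(r₁)²) + α·(r₂²·P(u(r₂)) − r₁²·P(u(r₁))) − 4ω·∫_{r₁}^{r₂} u(r)² r dr − 2α·∫_{r₁}^{r₂} P(u(r)) r dr. -/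

import Mathlib

open MeasureTheory Filter Set Real Topology

lemma tendsto_cube_log_sq : Tendsto (fun t : ℝ => t ^ 3 * Real.log (t ^ 2)) (𝓝[≠] (0:ℝ)) (𝓝 0) := by
  have h0 : Tendsto (fun x : ℝ => Real.log x * x) (𝓝[>] (0:ℝ)) (𝓝 0) := by
    simpa using tendsto_log_mul_rpow_nhdsGT_zero one_pos
  have h1 : Tendsto (fun t : ℝ => Real.log |t| * |t|) (𝓝[≠] (0:ℝ)) (𝓝 0) :=
    h0.comp tendsto_abs_nhdsNE_zero
  have h2 : Tendsto (fun t : ℝ => 2 * ‖Real.log |t| * |t|‖) (𝓝[≠] (0:ℝ)) (𝓝 0) := by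
    simpa using (h1.norm.const_mul 2)
  refine squeeze_zero_norm' ?_ h2
  filter_upwards [eventually_nhdsWithin_of_eventually_nhds
    (eventually_abs_sub_lt 0 (by norm_num : (0:ℝ) < 1))] with t ht
  have hb : |t| ≤ 1 := by simpa using ht.le
  have hlog : Real.log (t ^ 2) = 2 * Real.log |t| := by
    rw [← sq_abs]; rw [Real.log_pow]; push_cast; ring
  rw [hlog]
  have key : ‖t ^ 3 * (2 * Real.log |t|)‖ = 2 * (|t| ^ 2 * ‖Real.log |t| * |t|‖) := by
    simp only [norm_mul, Real.norm_eq_abs, abs_pow, abs_abs, abs_mul, abs_two]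
    ring
  rw [key]
  have hsq : |t| ^ 2 ≤ 1 := pow_le_one₀ (abs_nonneg t) hb
  nlinarith [norm_nonneg (Real.log |t| * |t|), mul_le_mul_of_nonneg_right hsq (norm_nonneg (Real.log |t| * |t|))]

lemma hasDerivAt_Pfun (β : ℝ) (hβ : 0 < β) (t : ℝ) :
    HasDerivAt (fun s : ℝ => s ^ 4 * Real.log (s ^ 2 / β) - s ^ 4 / 2)
      (4 * t ^ 3 * Real.log (t ^ 2 / β)) t := by
  rcases eq_or_ne t 0 with rfl | ht
  · have h0 : HasDerivAt (fun s : ℝ => s ^ 4 * Real.log (s ^ 2 / β) - s ^ 4 / 2) 0 0 := by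
      rw [hasDerivAt_iff_tendsto_slope]
      have hcg : ∀ᶠ s in 𝓝[≠] (0:ℝ),
          s ^ 3 * Real.log (s ^ 2) - s ^ 3 * Real.log β - s ^ 3 / 2
            = slope (fun s : ℝ => s ^ 4 * Real.log (s ^ 2 / β) - s ^ 4 / 2) 0 s := by
        filter_upwards [self_mem_nhdsWithin] with s hs
        have hs0 : s ≠ 0 := hs
        rw [slope_def_field]
        rw [Real.log_div (pow_ne_zero 2 hs0) hβ.ne']
        field_simp
        ring
      rw [← tendsto_congr' hcg]
      have h2 : Tendsto (fun s : ℝ => s ^ 3 * Real.log β) (𝓝[≠] (0:ℝ)) (𝓝 0) := by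
        have := (((continuous_pow 3).tendsto (0:ℝ)).mono_left
          (nhdsWithin_le_nhds (s := {(0:ℝ)}ᶜ))).mul_const (Real.log β)
        simpa using this
      have h3 : Tendsto (fun s : ℝ => s ^ 3 / 2) (𝓝[≠] (0:ℝ)) (𝓝 0) := by
        have := (((continuous_pow 3).tendsto (0:ℝ)).mono_left
          (nhdsWithin_le_nhds (s := {(0:ℝ)}ᶜ))).div_const 2
        simpa using this
      simpa using (tendsto_cube_log_sq.sub h2).sub h3
    convert h0 using 1
    norm_num
  · have hne : t ^ 2 / β ≠ 0 := by positivity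
    have h4 : HasDerivAt (fun s : ℝ => s ^ 4) (4 * t ^ 3) t := by
      simpa using hasDerivAt_pow 4 t
    have hin : HasDerivAt (fun s : ℝ => s ^ 2 / β) (2 * t / β) t := by
      simpa using (hasDerivAt_pow 2 t).div_const β
    have hlog : HasDerivAt (fun s : ℝ => Real.log (s ^ 2 / β))
        ((t ^ 2 / β)⁻¹ * (2 * t / β)) t := (Real.hasDerivAt_log hne).comp (h₂ := Real.log) t hin
    have := (h4.mul hlog).sub (h4.div_const 2)
    refine this.congr_deriv ?_
    field_simp
    ring


theorem gp_energy_identity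
    (α β : ℝ) (hα : 0 < α) (hβ : 0 < β) (ω : ℝ) (n : ℤ) (hn : n ≠ 0)
    (P : ℝ → ℝ)
    (hP : ∀ t, P t = t ^ 4 * Real.log (t ^ 2 / β) - t ^ 4 / 2)
    (u u' u'' : ℝ → ℝ)
    (hu' : ∀ r ∈ Set.Ioi (0 : ℝ), HasDerivAt u (u' r) r)
    (hu'' : ∀ r ∈ Set.Ioi (0 : ℝ), HasDerivAt u' (u'' r) r)
    (hu''c : ContinuousOn u'' (Set.Ioi (0 : ℝ)))
    (heq : ∀ r ∈ Set.Ioi (0 : ℝ),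
      u'' r + u' r / r - ((n : ℝ) ^ 2 / r ^ 2 + 2 * ω) * u r
        - 2 * α * (u r) ^ 3 * Real.log ((u r) ^ 2 / β) = 0) :
    ∀ r₁ r₂ : ℝ, 0 < r₁ → r₁ < r₂ →
      r₂ ^ 2 * (u' r₂) ^ 2 - r₁ ^ 2 * (u' r₁) ^ 2
        = (n : ℝ) ^ 2 * ((u r₂) ^ 2 - (u r₁) ^ 2)
          + 2 * ω * (r₂ ^ 2 * (u r₂) ^ 2 - r₁ ^ 2 * (u r₁) ^ 2)
          + α * (r₂ ^ 2 * P (u r₂) - r₁ ^ 2 * P (u r₁))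
          - 4 * ω * (∫ r in Set.Ioc r₁ r₂, (u r) ^ 2 * r)
          - 2 * α * (∫ r in Set.Ioc r₁ r₂, P (u r) * r) := by
  intro r₁ r₂ h1 h12
  have h2 : (0:ℝ) < r₂ := h1.trans h12
  have hsub : Set.uIcc r₁ r₂ ⊆ Set.Ioi (0:ℝ) := by
    rw [uIcc_of_le h12.le]
    intro x hx; exact lt_of_lt_of_le h1 hx.1
  have hucont : ContinuousOn u (Set.Ioi (0:ℝ)) :=
    fun x hx => (hu' x hx).continuousAt.continuousWithinAt
  have hQd : Differentiable ℝ (fun s : ℝ => s ^ 4 * Real.log (s ^ 2 / β) - s ^ 4 / 2) :=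
    fun t => (hasDerivAt_Pfun β hβ t).differentiableAt
  have hQc : Continuous (fun s : ℝ => s ^ 4 * Real.log (s ^ 2 / β) - s ^ 4 / 2) :=
    hQd.continuous
  -- the "energy" function and its derivative
  have hderiv : ∀ r ∈ Set.uIcc r₁ r₂,
      HasDerivAt (fun r => r ^ 2 * u' r ^ 2 - (n:ℝ) ^ 2 * u r ^ 2
          - 2 * ω * (r ^ 2 * u r ^ 2)
          - α * (r ^ 2 * ((u r) ^ 4 * Real.log ((u r) ^ 2 / β) - (u r) ^ 4 / 2)))
        ((-(4 * ω)) * (u r ^ 2 * r)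
          + (-(2 * α)) * (((u r) ^ 4 * Real.log ((u r) ^ 2 / β) - (u r) ^ 4 / 2) * r)) r := by
    intro r hr
    have hrI : r ∈ Set.Ioi (0:ℝ) := hsub hr
    have hrpos : (0:ℝ) < r := hrI
    have hu1 := hu' r hrI
    have hu2 := hu'' r hrI
    have hpow : HasDerivAt (fun s : ℝ => s ^ 2) (2 * r) r := by
      simpa using hasDerivAt_pow 2 r
    have hA := hpow.mul (hu2.pow 2)
    have hB := (hu1.pow 2).const_mul ((n:ℝ) ^ 2)
    have hC := (hpow.mul (hu1.pow 2)).const_mul (2 * ω)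
    have hD := (hpow.mul ((hasDerivAt_Pfun β hβ (u r)).comp r hu1)).const_mul α
    have hV' := ((hA.sub hB).sub hC).sub hD
    refine hV'.congr_deriv ?_
    have hODE : u'' r = ((n:ℝ) ^ 2 / r ^ 2 + 2 * ω) * u r
        + 2 * α * (u r) ^ 3 * Real.log ((u r) ^ 2 / β) - u' r / r := by
      have h := heq r hrI; linarith
    rw [hODE]
    simp only [Pi.pow_apply, Function.comp_apply]
    field_simp
    ring
  -- integrability
  have hgc : ContinuousOn
      (fun r => (-(4 * ω)) * (u r ^ 2 * r)
        + (-(2 * α)) * (((u r) ^ 4 * Real.log ((u r) ^ 2 / β) - (u r) ^ 4 / 2) * r))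
      (Set.uIcc r₁ r₂) := by
    have huc : ContinuousOn u (Set.uIcc r₁ r₂) := hucont.mono hsub
    exact (continuousOn_const.mul ((huc.pow 2).mul continuousOn_id)).add
      (continuousOn_const.mul (((hQc.comp_continuousOn huc)).mul continuousOn_id))
  have hft := intervalIntegral.integral_eq_sub_of_hasDerivAt hderiv
    (hgc.intervalIntegrable)
  rw [intervalIntegral.integral_of_le h12.le] at hft
  have hIccsub : Set.Icc r₁ r₂ ⊆ Set.Ioi (0:ℝ) := by
    rw [uIcc_of_le h12.le] at hsub; exact hsub
  have hi1 : IntegrableOn (fun r => u r ^ 2 * r) (Set.Ioc r₁ r₂) :=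
    ((((hucont.mono hIccsub).pow 2).mul continuousOn_id).integrableOn_Icc).mono_set
      Set.Ioc_subset_Icc_self
  have hi2 : IntegrableOn
      (fun r => ((u r) ^ 4 * Real.log ((u r) ^ 2 / β) - (u r) ^ 4 / 2) * r)
      (Set.Ioc r₁ r₂) :=
    (((hQc.comp_continuousOn (hucont.mono hIccsub)).mul continuousOn_id).integrableOn_Icc).mono_set
      Set.Ioc_subset_Icc_self
  rw [MeasureTheory.integral_add (hi1.const_mul _) (hi2.const_mul _),
    MeasureTheory.integral_const_mul, MeasureTheory.integral_const_mul] at hft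
  simp only [hP]
  linarith [hft]
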